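/- The number of even orbits of G on X, multiplied by the order |G|, equals Σ_{g ∈ G} Σ_{x ∈ X, g·x = x} ε(g,x), the sum being taken in ℤ (with ε valued in {1, −1} ⊆ ℤ). -/

import Mathlib

set_option linter.unusedSectionVars false
set_option linter.deprecated false


open MulAction Finset

section Aux
variable {G X : Type*} [Group G] [Fintype G] [Fintype X] [DecidableEq X] [MulAction G X]
variable (ε : G → X → ℤ) (hval : ∀ g x, ε g x = 1 ∨ ε g x = -1)
    (hcoc : ∀ g h x, ε (g * h) x = ε g (h • x) * ε h x)

include hval hcoc in
lemma aux_eps_one (x : X) : ε 1 x = 1 := by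
  have h := hcoc 1 1 x
  simp only [one_mul, one_smul] at h
  rcases hval 1 x with h1 | h1
  · exact h1
  · rw [h1] at h; norm_num at h

include hval hcoc in
lemma aux_eps_conj (h k : G) (x : X) (hk : k • x = x) :
    ε (h * k * h⁻¹) (h • x) = ε k x := by
  have e1 : ε (h * (k * h⁻¹)) (h • x) = ε h ((k * h⁻¹) • (h • x)) * ε (k * h⁻¹) (h • x) :=
    hcoc h (k * h⁻¹) (h • x)
  have hx1 : (k * h⁻¹) • (h • x) = x := by rw [mul_smul, inv_smul_smul, hk]
  have e2 : ε (k * h⁻¹) (h • x) = ε k (h⁻¹ • h • x) * ε h⁻¹ (h • x) := hcoc k h⁻¹ (h • x)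
  have e3 : ε (h⁻¹ * h) x = ε h⁻¹ (h • x) * ε h x := hcoc h⁻¹ h x
  rw [inv_mul_cancel, aux_eps_one ε hval hcoc] at e3
  rw [inv_smul_smul] at e2
  rw [mul_assoc]
  rw [e1, hx1, e2]
  linear_combination (-(ε k x)) * e3

include hval hcoc in
lemma aux_S_smul (h : G) (x : X) :
    ∑ g : G, (if g • (h • x) = h • x then ε g (h • x) else 0) =
    ∑ g : G, (if g • x = x then ε g x else 0) := by
  refine (Fintype.sum_equiv (MulAut.conj h).toEquiv _ _ ?_).symm
  intro k
  have hcond : ((h * k * h⁻¹) • (h • x) = h • x) ↔ (k • x = x) := by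
    rw [mul_smul, mul_smul, inv_smul_smul, smul_left_cancel_iff]
  simp only [MulEquiv.toEquiv_eq_coe, MulEquiv.coe_toEquiv, MulAut.conj_apply]
  split_ifs with h1 h2 h2
  · show _ = ite ((h * k * h⁻¹) • h • x = h • x) _ _; rw [if_pos (hcond.2 h1)]; exact (aux_eps_conj ε hval hcoc h k x h1).symm
  · exact absurd (hcond.2 h1) h2
  · exact absurd (hcond.1 h2) h1
  · show _ = ite ((h * k * h⁻¹) • h • x = h • x) _ _; rw [if_neg h2]

include hval hcoc in
lemma aux_S_even (x : X) (hx : ∀ g : G, g • x = x → ε g x = 1) :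
    ∑ g : G, (if g • x = x then ε g x else 0) = Nat.card (stabilizer G x) := by
  classical
  have : ∀ g : G, (if g • x = x then ε g x else 0) = (if g • x = x then 1 else 0) := by
    intro g; split_ifs with h; exacts [hx g h, rfl]
  rw [Finset.sum_congr rfl fun g _ => this g,
    Finset.sum_boole (p := fun g : G => g • x = x) Finset.univ]
  have h1 : Nat.card (stabilizer G x) = (Finset.univ.filter (fun g : G => g • x = x)).card := by
    rw [show Nat.card (stabilizer G x) = Nat.card {g : G // g • x = x} from rfl,
      Nat.card_eq_fintype_card, Fintype.card_subtype]
  rw [h1]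

include hval hcoc in
lemma aux_S_odd (x : X) (g0 : G) (hg0 : g0 • x = x) (hneg : ε g0 x = -1) :
    ∑ g : G, (if g • x = x then ε g x else 0) = 0 := by
  have key : ∑ g : G, (if g • x = x then ε g x else 0) =
      ∑ g : G, (if g • x = x then -ε g x else 0) := by
    refine Fintype.sum_equiv (Equiv.mulLeft g0) _ _ ?_
    intro k
    simp only [Equiv.coe_mulLeft]
    have hcond : ((g0 * k) • x = x) ↔ (k • x = x) := by
      rw [mul_smul]
      have hx' : g0⁻¹ • x = x := inv_smul_eq_iff.2 hg0.symm
      constructor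
      · intro hh
        have h2 := congrArg (fun y => g0⁻¹ • y) hh
        simp only [inv_smul_smul] at h2
        rw [h2, hx']
      · intro hh; rw [hh, hg0]
    split_ifs with h1 h2 h2
    · show _ = ite ((g0 * k) • x = x) _ _; rw [if_pos h2, hcoc g0 k x, h1, hneg]; ring
    · exact absurd (hcond.2 h1) h2
    · exact absurd (hcond.1 h2) h1
    · show _ = ite ((g0 * k) • x = x) _ _; rw [if_neg h2]
  have h2 : ∑ g : G, (if g • x = x then -ε g x else 0) =
      -∑ g : G, (if g • x = x then ε g x else 0) := by
    rw [← Finset.sum_neg_distrib]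
    refine Finset.sum_congr rfl fun g _ => ?_
    split_ifs <;> simp
  rw [h2] at key
  linarith

end Aux

/-- Let `G` be a finite group acting on a finite set `X`, and let
`ε : G × X → {1, -1} ⊆ ℤ` satisfy the cocycle condition
`ε (g * h) x = ε g (h • x) * ε h x`.  An orbit `O` is even if `ε g x = 1` for every
`x ∈ O` and every `g` fixing `x`.  Then the number of even orbits times `|G|` equals
`∑_{g ∈ G} ∑_{x ∈ X, g • x = x} ε g x` in `ℤ`. -/
theorem stmt_2 {G X : Type*} [Group G] [Fintype G] [Fintype X] [DecidableEq X]
    [MulAction G X]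
    (ε : G → X → ℤ) (hval : ∀ g x, ε g x = 1 ∨ ε g x = -1)
    (hcoc : ∀ g h x, ε (g * h) x = ε g (h • x) * ε h x) :
    (Nat.card {O : MulAction.orbitRel.Quotient G X //
        ∀ x ∈ O.orbit, ∀ g : G, g • x = x → ε g x = 1} : ℤ) * Fintype.card G =
      ∑ g : G, ∑ x : X, if g • x = x then ε g x else 0 := by
  classical
  set S : X → ℤ := fun x => ∑ g : G, if g • x = x then ε g x else 0 with hS
  set P : MulAction.orbitRel.Quotient G X → Prop :=
    fun O => ∀ x ∈ O.orbit, ∀ g : G, g • x = x → ε g x = 1 with hP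
  have hswap : (∑ g : G, ∑ x : X, if g • x = x then ε g x else 0) = ∑ x : X, S x :=
    Finset.sum_comm
  have hfib : (∑ x : X, S x) =
      ∑ ω : MulAction.orbitRel.Quotient G X,
        ∑ x ∈ Finset.univ.filter
          (fun x : X => (Quotient.mk'' x : MulAction.orbitRel.Quotient G X) = ω), S x :=
    (Finset.sum_fiberwise _ _ _).symm
  have key : ∀ ω : MulAction.orbitRel.Quotient G X,
      (∑ x ∈ Finset.univ.filter
          (fun x : X => (Quotient.mk'' x : MulAction.orbitRel.Quotient G X) = ω), S x) =
      if P ω then (Fintype.card G : ℤ) else 0 := by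
    intro ω
    set x₀ : X := Quotient.out ω with hx₀
    have horbit : ω.orbit = MulAction.orbit G x₀ :=
      MulAction.orbitRel.Quotient.orbit_eq_orbit_out ω Quotient.out_eq'
    have hmem : ∀ x : X,
        ((Quotient.mk'' x : MulAction.orbitRel.Quotient G X) = ω) ↔
          x ∈ MulAction.orbit G x₀ := by
      intro x
      rw [← MulAction.orbitRel.Quotient.mem_orbit, horbit]
    have hx₀mem : x₀ ∈ ω.orbit := by
      rw [horbit]; exact MulAction.mem_orbit_self x₀
    have hconst : ∀ x ∈ MulAction.orbit G x₀, S x = S x₀ := by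
      rintro x ⟨h, rfl⟩
      exact aux_S_smul ε hval hcoc h x₀
    have hsum : (∑ x ∈ Finset.univ.filter
          (fun x : X => (Quotient.mk'' x : MulAction.orbitRel.Quotient G X) = ω), S x) =
        (Finset.univ.filter
          (fun x : X => (Quotient.mk'' x : MulAction.orbitRel.Quotient G X) = ω)).card •
          S x₀ := by
      rw [← Finset.sum_const]
      refine Finset.sum_congr rfl fun x hx => ?_
      rw [Finset.mem_filter] at hx
      exact hconst x ((hmem x).1 hx.2)
    have hcard : (Finset.univ.filter
          (fun x : X => (Quotient.mk'' x : MulAction.orbitRel.Quotient G X) = ω)).card =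
        Nat.card (MulAction.orbit G x₀) := by
      rw [show Nat.card (MulAction.orbit G x₀) =
          Nat.card {x : X // x ∈ MulAction.orbit G x₀} from rfl,
        Nat.card_eq_fintype_card, Fintype.card_subtype]
      congr 1
      exact Finset.filter_congr fun x _ => (hmem x)
    rw [hsum, hcard]
    by_cases hPω : P ω
    · rw [if_pos hPω]
      have hS0 : S x₀ = Nat.card (MulAction.stabilizer G x₀) :=
        aux_S_even ε hval hcoc x₀ (fun g hg => hPω x₀ hx₀mem g hg)
      rw [hS0, nsmul_eq_mul]
      have := MulAction.card_orbit_mul_card_stabilizer_eq_card_group G x₀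
      push_cast
      rw [Nat.card_eq_fintype_card, Nat.card_eq_fintype_card]
      exact_mod_cast congrArg (Nat.cast : ℕ → ℤ) this
    · rw [if_neg hPω]
      have hPω' : ∃ x ∈ ω.orbit, ∃ g : G, g • x = x ∧ ε g x ≠ 1 := by
        by_contra hc
        push_neg at hc
        exact hPω (fun x hx g hg => hc x hx g hg)
      obtain ⟨x, hxorb, g, hgx, hgε⟩ := hPω'
      have hεneg : ε g x = -1 := (hval g x).resolve_left hgε
      have hSx : S x = 0 := aux_S_odd ε hval hcoc x g hgx hεneg
      have : S x₀ = 0 := by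
        rw [← hconst x (horbit ▸ hxorb)]
        exact hSx
      rw [this, smul_zero]
  rw [hswap, hfib, Finset.sum_congr rfl fun ω _ => key ω]
  rw [show Nat.card (Subtype P) = (Finset.univ.filter P).card by
      rw [Nat.card_eq_fintype_card, Fintype.card_subtype],
    ← Finset.sum_filter, Finset.sum_const, nsmul_eq_mul]
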